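/- Let n > 1 be an integer with prime factorization n = p_1^{a_1} p_2^{a_2} ⋯ p_k^{a_k} (p_i distinct primes, a_i ≥ 1). The divisibility lattice L_n of divisors of n ordered by divisibility satisfies D(L_n) = 1 if the exponents a_1, …, a_k are pairwise distinct, and D(L_n) = 2 otherwise. -/

import Mathlib

/-- The divisibility lattice of `n`: divisors of `n` ordered by divisibility. -/
def DivLattice (n : ℕ) : Type := {d : ℕ // d ∣ n}

instance (n : ℕ) : PartialOrder (DivLattice n) where
  le a b := a.val ∣ b.val
  le_refl a := dvd_refl _
  le_trans a b c := dvd_trans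
  le_antisymm a b h h' := Subtype.ext (Nat.dvd_antisymm h h')

/-- A coloring `c` of a poset is distinguishing if the only color-preserving
order-automorphism is the identity. -/
def IsDistinguishing {α : Type*} [PartialOrder α] {C : Type*} (c : α → C) : Prop :=
  ∀ φ : α ≃o α, (∀ x, c (φ x) = c x) → ∀ x, φ x = x

/-- The distinguishing number of a poset. -/
noncomputable def distNum (α : Type*) [PartialOrder α] : ℕ :=
  sInf {k | ∃ c : α → Fin k, IsDistinguishing c}

namespace DistAux

variable {n : ℕ}

def mk (d : ℕ) (h : d ∣ n) : DivLattice n := Subtype.mk d h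

@[simp] lemma val_mk {d : ℕ} {h : d ∣ n} : (mk d h).val = d := rfl

lemma ext {a b : DivLattice n} (h : a.val = b.val) : a = b := Subtype.ext h

lemma le_iff {a b : DivLattice n} : a ≤ b ↔ a.val ∣ b.val := Iff.rfl

lemma lt_iff {a b : DivLattice n} : a < b ↔ a.val ∣ b.val ∧ a.val ≠ b.val := by
  rw [lt_iff_le_and_ne]
  constructor
  · rintro ⟨h1, h2⟩; exact ⟨h1, fun hv => h2 (ext hv)⟩
  · rintro ⟨h1, h2⟩; exact ⟨h1, fun hv => h2 (congrArg Subtype.val hv)⟩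

lemma val_ne_zero (hn : n ≠ 0) (a : DivLattice n) : a.val ≠ 0 := by
  intro h
  exact hn (by simpa [h, zero_dvd_iff] using a.prop)

lemma one_le (a : DivLattice n) : mk 1 (one_dvd n) ≤ a := one_dvd _

lemma map_one (φ : DivLattice n ≃o DivLattice n) : φ (mk 1 (one_dvd n)) = mk 1 (one_dvd n) := by
  refine le_antisymm ?_ (one_le _)
  have h := φ.monotone (one_le (φ.symm (mk 1 (one_dvd n))))
  rwa [φ.apply_symm_apply] at h

/-- The order-theoretic property characterizing nontrivial prime powers. -/
def HasMaxBelow (x : DivLattice n) : Prop := ∃ m, m < x ∧ ∀ y, y < x → y ≤ m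

lemma hasMaxBelow_map (φ : DivLattice n ≃o DivLattice n) (x : DivLattice n)
    (h : HasMaxBelow x) : HasMaxBelow (φ x) := by
  obtain ⟨m, hm, hmax⟩ := h
  refine ⟨φ m, φ.strictMono hm, fun y hy => ?_⟩
  have hy' : φ.symm y < x := by
    have := φ.symm.strictMono hy
    rwa [φ.symm_apply_apply] at this
  have := φ.monotone (hmax _ hy')
  rwa [φ.apply_symm_apply] at this

lemma hasMaxBelow_map_iff (φ : DivLattice n ≃o DivLattice n) (x : DivLattice n) :
    HasMaxBelow (φ x) ↔ HasMaxBelow x := by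
  refine ⟨fun h => ?_, hasMaxBelow_map φ x⟩
  have := hasMaxBelow_map φ.symm (φ x) h
  rwa [φ.symm_apply_apply] at this

lemma hasMaxBelow_iff (hn : n ≠ 0) (x : DivLattice n) :
    HasMaxBelow x ↔ ∃ p b, Nat.Prime p ∧ 0 < b ∧ x.val = p ^ b := by
  constructor
  · rintro ⟨m, hm, hmax⟩
    by_cases hpp : ∃ p, Nat.Prime p ∧ x.val = p ^ x.val.factorization p
    · obtain ⟨p, hp, hx⟩ := hpp
      refine ⟨p, x.val.factorization p, hp, ?_, hx⟩
      rcases Nat.eq_zero_or_pos (x.val.factorization p) with h0 | h0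
      · rw [h0, pow_zero] at hx
        -- x.val = 1, but m < x impossible
        exfalso
        rw [lt_iff] at hm
        have : m.val = 1 := Nat.eq_one_of_dvd_one (hx ▸ hm.1)
        exact hm.2 (this.trans hx.symm)
      · exact h0
    · exfalso
      push_neg at hpp
      -- every ord_proj is a strict divisor, hence ≤ m, hence x ∣ m
      have hx0 : x.val ≠ 0 := val_ne_zero hn x
      have hxm : x.val ∣ m.val := by
        have hm0 : m.val ≠ 0 := val_ne_zero hn m
        rw [← Nat.factorization_le_iff_dvd hx0 hm0]
        intro p
        by_cases hp : Nat.Prime p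
        · rcases Nat.eq_zero_or_pos (x.val.factorization p) with h0 | h0
          · simp [h0]
          · have hdvd : p ^ x.val.factorization p ∣ x.val := Nat.ordProj_dvd _ _
            have hlt : mk (p ^ x.val.factorization p) (hdvd.trans x.prop) < x := by
              rw [lt_iff]
              exact ⟨hdvd, fun he => hpp p hp he.symm⟩
            have := hmax _ hlt
            rw [le_iff, val_mk] at this
            exact (Nat.Prime.pow_dvd_iff_le_factorization hp hm0).mp this
        · simp [Nat.factorization_eq_zero_of_not_prime _ hp]
      have : x ≤ m := hxm
      exact absurd hm (not_lt_of_ge this)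
  · rintro ⟨p, b, hp, hb, hx⟩
    have hdvd : p ^ (b - 1) ∣ x.val := hx ▸ pow_dvd_pow p (Nat.sub_le b 1)
    refine ⟨mk (p ^ (b - 1)) (hdvd.trans x.prop), ?_, ?_⟩
    · rw [lt_iff, val_mk, hx]
      refine ⟨pow_dvd_pow p (Nat.sub_le b 1), fun he => ?_⟩
      have := Nat.pow_right_injective hp.two_le he
      omega
    · intro y hy
      rw [lt_iff, hx] at hy
      obtain ⟨j, hj, hy'⟩ := (Nat.dvd_prime_pow hp).mp hy.1
      have hjb : j ≠ b := fun h => hy.2 (by rw [hy', h])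
      rw [le_iff, val_mk, hy']
      exact pow_dvd_pow p (by omega)

lemma covby_mk_pow {p : ℕ} (hp : p.Prime) (b : ℕ) (h : p ^ (b + 1) ∣ n) :
    mk (p ^ b) ((pow_dvd_pow p b.le_succ).trans h) ⋖ mk (p ^ (b + 1)) h := by
  constructor
  · rw [lt_iff, val_mk, val_mk]
    refine ⟨pow_dvd_pow p b.le_succ, fun he => ?_⟩
    have := Nat.pow_right_injective hp.two_le he
    omega
  · intro z hz1 hz2
    rw [lt_iff, val_mk] at hz1 hz2
    obtain ⟨j, hj, hz'⟩ := (Nat.dvd_prime_pow hp).mp hz2.1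
    rw [hz'] at hz1 hz2
    have h1 : b ≤ j := (Nat.pow_dvd_pow_iff_le_right hp.one_lt).mp hz1.1
    have h2 : b ≠ j := fun he => hz1.2 (by rw [he])
    have : j = b + 1 := by omega
    exact hz2.2 (by rw [this])

lemma prime_of_covby_one (hn : n ≠ 0) {x y : DivLattice n} (hx : x.val = 1) (hxy : x ⋖ y) :
    y.val.Prime := by
  have hy1 : y.val ≠ 1 := by
    intro h
    have := hxy.1
    rw [lt_iff, hx, h] at this
    exact this.2 rfl
  obtain ⟨r, hr, hrd⟩ := Nat.exists_prime_and_dvd hy1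
  have hry : r = y.val := by
    by_contra hne
    have h1 : x < mk r (hrd.trans y.prop) := by
      rw [lt_iff, hx, val_mk]
      exact ⟨one_dvd r, fun h => hr.ne_one h.symm⟩
    have h2 : mk r (hrd.trans y.prop) < y := by
      rw [lt_iff, val_mk]
      exact ⟨hrd, hne⟩
    exact hxy.2 h1 h2
  exact hry ▸ hr

lemma pow_succ_of_covby (hn : n ≠ 0) {q : ℕ} (hq : q.Prime) {i : ℕ} (hi : 0 < i)
    {x y : DivLattice n} (hx : x.val = q ^ i) (hxy : x ⋖ y)
    (hy : ∃ r c, Nat.Prime r ∧ 0 < c ∧ y.val = r ^ c) : y.val = q ^ (i + 1) := by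
  obtain ⟨r, c, hr, hc, hyv⟩ := hy
  have hlt := hxy.1
  rw [lt_iff, hx, hyv] at hlt
  have hqr : q = r := by
    have : q ∣ r ^ c := (dvd_pow_self q hi.ne').trans hlt.1
    exact (Nat.prime_dvd_prime_iff_eq hq hr).mp (hq.dvd_of_dvd_pow this)
  subst hqr
  have hic : i ≤ c := (Nat.pow_dvd_pow_iff_le_right hq.one_lt).mp hlt.1
  have hne : i ≠ c := fun h => hlt.2 (by rw [h])
  have hcis : c = i + 1 := by
    by_contra hcc
    have hlt2 : i + 1 < c := by omega
    have hd1 : q ^ (i + 1) ∣ q ^ c := pow_dvd_pow q hlt2.le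
    have h1 : x < mk (q ^ (i + 1)) (hd1.trans (hyv ▸ y.prop)) := by
      rw [lt_iff, hx, val_mk]
      refine ⟨pow_dvd_pow q i.le_succ, fun he => ?_⟩
      have := Nat.pow_right_injective hq.two_le he
      omega
    have h2 : mk (q ^ (i + 1)) (hd1.trans (hyv ▸ y.prop)) < y := by
      rw [lt_iff, val_mk, hyv]
      refine ⟨hd1, fun he => ?_⟩
      have := Nat.pow_right_injective hq.two_le he
      omega
    exact hxy.2 h1 h2
  rw [hyv, hcis]

lemma exists_prime_image (hn : n ≠ 0) (φ : DivLattice n ≃o DivLattice n) {p : ℕ}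
    (hp : p.Prime) (hpn : p ∣ n) :
    ∃ q : ℕ, q.Prime ∧ ∀ b (hb : p ^ b ∣ n), (φ (mk (p ^ b) hb)).val = q ^ b := by
  have hp1 : p ^ 1 ∣ n := by rwa [pow_one]
  have hmkp : mk (p ^ 1) hp1 = mk p hpn := ext (pow_one p)
  have hcov1 : mk (p ^ 0) ((pow_dvd_pow p (Nat.zero_le 1)).trans hp1) ⋖ mk (p ^ 1) hp1 :=
    covby_mk_pow hp 0 hp1
  have hbot : mk (p ^ 0) ((pow_dvd_pow p (Nat.zero_le 1)).trans hp1) = mk 1 (one_dvd n) :=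
    ext (pow_zero p)
  have hcovφ : φ (mk 1 (one_dvd n)) ⋖ φ (mk p hpn) := by
    rw [← hbot, ← hmkp]
    exact (apply_covBy_apply_iff (φ : DivLattice n ≃o DivLattice n)).mpr hcov1
  rw [map_one] at hcovφ
  have hq : (φ (mk p hpn)).val.Prime := prime_of_covby_one hn rfl hcovφ
  refine ⟨(φ (mk p hpn)).val, hq, ?_⟩
  intro b
  induction b with
  | zero =>
    intro hb
    have : mk (p ^ 0) hb = mk 1 (one_dvd n) := ext (pow_zero p)
    rw [this, map_one, pow_zero]
    rfl
  | succ b ih =>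
    intro hb
    rcases Nat.eq_zero_or_pos b with rfl | hbpos
    · have heq : mk (p ^ (0 + 1)) hb = mk p hpn := ext (pow_one p)
      rw [heq]
      simp
    · have hb' : p ^ b ∣ n := (pow_dvd_pow p b.le_succ).trans hb
      have hcov : mk (p ^ b) ((pow_dvd_pow p b.le_succ).trans hb) ⋖ mk (p ^ (b + 1)) hb :=
        covby_mk_pow hp b hb
      have hcovφ2 : φ (mk (p ^ b) ((pow_dvd_pow p b.le_succ).trans hb)) ⋖
          φ (mk (p ^ (b + 1)) hb) :=
        (apply_covBy_apply_iff (φ : DivLattice n ≃o DivLattice n)).mpr hcov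
      have hyJ : ∃ r c, Nat.Prime r ∧ 0 < c ∧ (φ (mk (p ^ (b + 1)) hb)).val = r ^ c := by
        rw [← hasMaxBelow_iff hn, hasMaxBelow_map_iff, hasMaxBelow_iff hn]
        exact ⟨p, b + 1, hp, Nat.succ_pos b, rfl⟩
      exact pow_succ_of_covby hn hq hbpos (ih ((pow_dvd_pow p b.le_succ).trans hb)) hcovφ2 hyJ

/-- Extract a total function on primes from an order automorphism. -/
lemma sigma_spec (hn : n ≠ 0) (φ : DivLattice n ≃o DivLattice n) :
    ∃ σ : ℕ → ℕ, ∀ p, p ∈ n.primeFactors →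
      (σ p).Prime ∧ σ p ∣ n ∧ ∀ b (hb : p ^ b ∣ n), (φ (mk (p ^ b) hb)).val = σ p ^ b := by
  have key : ∀ p : ℕ, ∃ q : ℕ, p ∈ n.primeFactors →
      q.Prime ∧ q ∣ n ∧ ∀ b (hb : p ^ b ∣ n), (φ (mk (p ^ b) hb)).val = q ^ b := by
    intro p
    by_cases h : p ∈ n.primeFactors
    · obtain ⟨hp, hpn, -⟩ := Nat.mem_primeFactors.mp h
      obtain ⟨q, hq, hqpow⟩ := exists_prime_image hn φ hp hpn
      refine ⟨q, fun _ => ⟨hq, ?_, hqpow⟩⟩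
      have hp1 : p ^ 1 ∣ n := by rwa [pow_one]
      have hth := hqpow 1 hp1
      have hd := (φ (mk (p ^ 1) hp1)).prop
      rw [hth] at hd
      simpa using hd
    · exact ⟨p, fun hc => absurd hc h⟩
  choose σ hσ using key
  exact ⟨σ, hσ⟩

lemma sigma_mk_prime (hn : n ≠ 0) (φ : DivLattice n ≃o DivLattice n) {σ : ℕ → ℕ}
    (hσ : ∀ p, p ∈ n.primeFactors →
      (σ p).Prime ∧ σ p ∣ n ∧ ∀ b (hb : p ^ b ∣ n), (φ (mk (p ^ b) hb)).val = σ p ^ b)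
    {p : ℕ} (hp : p ∈ n.primeFactors) (hpn : p ∣ n) :
    φ (mk p hpn) = mk (σ p) (hσ p hp).2.1 := by
  have hp1 : p ^ 1 ∣ n := by rwa [pow_one]
  have h1 := (hσ p hp).2.2 1 hp1
  refine ext ?_
  have heq : mk p hpn = mk (p ^ 1) hp1 := ext (pow_one p).symm
  rw [heq, h1, pow_one, val_mk]

lemma sigma_mem (hn : n ≠ 0) (φ : DivLattice n ≃o DivLattice n) {σ : ℕ → ℕ}
    (hσ : ∀ p, p ∈ n.primeFactors →
      (σ p).Prime ∧ σ p ∣ n ∧ ∀ b (hb : p ^ b ∣ n), (φ (mk (p ^ b) hb)).val = σ p ^ b)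
    {p : ℕ} (hp : p ∈ n.primeFactors) : σ p ∈ n.primeFactors :=
  Nat.mem_primeFactors.mpr ⟨(hσ p hp).1, (hσ p hp).2.1, hn⟩

lemma sigma_injOn (hn : n ≠ 0) (φ : DivLattice n ≃o DivLattice n) {σ : ℕ → ℕ}
    (hσ : ∀ p, p ∈ n.primeFactors →
      (σ p).Prime ∧ σ p ∣ n ∧ ∀ b (hb : p ^ b ∣ n), (φ (mk (p ^ b) hb)).val = σ p ^ b) :
    Set.InjOn σ n.primeFactors := by
  intro p hp p' hp' he
  have h1 := sigma_mk_prime hn φ hσ hp (Nat.mem_primeFactors.mp hp).2.1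
  have h2 := sigma_mk_prime hn φ hσ hp' (Nat.mem_primeFactors.mp hp').2.1
  have : φ (mk p (Nat.mem_primeFactors.mp hp).2.1) = φ (mk p' (Nat.mem_primeFactors.mp hp').2.1) := by
    rw [h1, h2]; exact ext he
  have := φ.injective this
  exact congrArg Subtype.val this

/-- `σ` composed with the `τ` obtained from `φ.symm` is the identity on prime factors. -/
lemma sigma_tau (hn : n ≠ 0) (φ : DivLattice n ≃o DivLattice n) {σ τ : ℕ → ℕ}
    (hσ : ∀ p, p ∈ n.primeFactors →
      (σ p).Prime ∧ σ p ∣ n ∧ ∀ b (hb : p ^ b ∣ n), (φ (mk (p ^ b) hb)).val = σ p ^ b)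
    (hτ : ∀ p, p ∈ n.primeFactors →
      (τ p).Prime ∧ τ p ∣ n ∧ ∀ b (hb : p ^ b ∣ n), (φ.symm (mk (p ^ b) hb)).val = τ p ^ b)
    {s : ℕ} (hs : s ∈ n.primeFactors) : τ s ∈ n.primeFactors ∧ σ (τ s) = s := by
  have hts : τ s ∈ n.primeFactors := sigma_mem hn φ.symm hτ hs
  refine ⟨hts, ?_⟩
  have h1 := sigma_mk_prime hn φ.symm hτ hs (Nat.mem_primeFactors.mp hs).2.1
  have h2 := sigma_mk_prime hn φ hσ hts (hτ s hs).2.1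
  have h3 : φ (φ.symm (mk s (Nat.mem_primeFactors.mp hs).2.1)) =
      mk (σ (τ s)) (hσ (τ s) hts).2.1 := by
    rw [h1]; exact h2
  rw [φ.apply_symm_apply] at h3
  exact (congrArg Subtype.val h3).symm

lemma dvd_of_primePow_dvd {a b : ℕ} (ha : a ≠ 0) (hb : b ≠ 0)
    (h : ∀ p i, Nat.Prime p → 0 < i → p ^ i ∣ a → p ^ i ∣ b) : a ∣ b := by
  rw [← Nat.factorization_le_iff_dvd ha hb]
  intro p
  by_cases hp : Nat.Prime p
  · rcases Nat.eq_zero_or_pos (a.factorization p) with h0 | h0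
    · simp [h0]
    · have := h p _ hp h0 (Nat.ordProj_dvd a p)
      exact (Nat.Prime.pow_dvd_iff_le_factorization hp hb).mp this
  · simp [Nat.factorization_eq_zero_of_not_prime _ hp]

lemma eq_self_of_fixes (hn : n ≠ 0) (φ : DivLattice n ≃o DivLattice n)
    (hfix : ∀ (p b : ℕ) (_ : p.Prime) (_ : 0 < b) (h : p ^ b ∣ n),
      φ (mk (p ^ b) h) = mk (p ^ b) h) : ∀ x, φ x = x := by
  have hfix' : ∀ (p b : ℕ) (_ : p.Prime) (_ : 0 < b) (h : p ^ b ∣ n),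
      φ.symm (mk (p ^ b) h) = mk (p ^ b) h := by
    intro p b hp hb h
    conv_lhs => rw [← hfix p b hp hb h]
    exact φ.symm_apply_apply _
  intro x
  have hx0 : x.val ≠ 0 := val_ne_zero hn x
  have hφx0 : (φ x).val ≠ 0 := val_ne_zero hn (φ x)
  refine ext (Nat.dvd_antisymm ?_ ?_)
  · -- (φ x).val ∣ x.val
    refine dvd_of_primePow_dvd hφx0 hx0 ?_
    intro p i hp hi hdvd
    have hpn : p ^ i ∣ n := hdvd.trans (φ x).prop
    have h1 : mk (p ^ i) hpn ≤ φ x := hdvd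
    have h2 : φ.symm (mk (p ^ i) hpn) ≤ φ.symm (φ x) := φ.symm.monotone h1
    rw [φ.symm_apply_apply, hfix' p i hp hi hpn] at h2
    exact h2
  · refine dvd_of_primePow_dvd hx0 hφx0 ?_
    intro p i hp hi hdvd
    have hpn : p ^ i ∣ n := hdvd.trans x.prop
    have h1 : mk (p ^ i) hpn ≤ x := hdvd
    have h2 := φ.monotone h1
    rw [hfix p i hp hi hpn] at h2
    exact h2

/-! ### The swap automorphism -/

/-- Swap the powers of `p` and `q` in `d`. -/
def swapFun (p q d : ℕ) : ℕ :=
  ordCompl[p] (ordCompl[q] d) * p ^ d.factorization q * q ^ d.factorization p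

lemma swapFun_ne_zero {p q d : ℕ} (hp : 0 < p) (hq : 0 < q) (hd : d ≠ 0) :
    swapFun p q d ≠ 0 := by
  have h1 : 0 < ordCompl[q] d := Nat.ordCompl_pos q hd
  have h2 : 0 < ordCompl[p] (ordCompl[q] d) := Nat.ordCompl_pos p h1.ne'
  exact mul_ne_zero (mul_ne_zero h2.ne' (pow_ne_zero _ hp.ne')) (pow_ne_zero _ hq.ne')

lemma factorization_swapFun {p q d : ℕ} (hp : p.Prime) (hq : q.Prime) (hpq : p ≠ q)
    (hd : d ≠ 0) (r : ℕ) :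
    (swapFun p q d).factorization r = d.factorization (Equiv.swap p q r) := by
  have h1 : ordCompl[q] d ≠ 0 := (Nat.ordCompl_pos q hd).ne'
  have h2 : ordCompl[p] (ordCompl[q] d) ≠ 0 := (Nat.ordCompl_pos p h1).ne'
  have h3 : (p : ℕ) ^ d.factorization q ≠ 0 := pow_ne_zero _ hp.pos.ne'
  have h4 : (q : ℕ) ^ d.factorization p ≠ 0 := pow_ne_zero _ hq.pos.ne'
  rw [swapFun, Nat.factorization_mul (mul_ne_zero h2 h3) h4,
    Nat.factorization_mul h2 h3, Nat.factorization_ordCompl, Nat.factorization_ordCompl,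
    hp.factorization_pow, hq.factorization_pow]
  simp only [Finsupp.add_apply, Finsupp.erase_apply, Finsupp.single_apply]
  rcases eq_or_ne r p with rfl | hrp
  · rw [Equiv.swap_apply_left]
    simp [hpq, Ne.symm hpq]
  · rcases eq_or_ne r q with rfl | hrq
    · rw [Equiv.swap_apply_right]
      simp [hrp, hpq.symm, Ne.symm hrp]
    · rw [Equiv.swap_apply_of_ne_of_ne hrp hrq]
      simp [hrp, hrq, Ne.symm hrp, Ne.symm hrq]

lemma swapFun_dvd_swapFun {p q d e : ℕ} (hp : p.Prime) (hq : q.Prime) (hpq : p ≠ q)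
    (hd : d ≠ 0) (he : e ≠ 0) (h : d ∣ e) : swapFun p q d ∣ swapFun p q e := by
  rw [← Nat.factorization_le_iff_dvd (swapFun_ne_zero hp.pos hq.pos hd)
    (swapFun_ne_zero hp.pos hq.pos he)]
  intro r
  rw [factorization_swapFun hp hq hpq hd, factorization_swapFun hp hq hpq he]
  exact (Nat.factorization_le_iff_dvd hd he).mpr h _

lemma swapFun_swapFun {p q d : ℕ} (hp : p.Prime) (hq : q.Prime) (hpq : p ≠ q) (hd : d ≠ 0) :
    swapFun p q (swapFun p q d) = d := by
  have h0 : swapFun p q d ≠ 0 := swapFun_ne_zero hp.pos hq.pos hd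
  refine Nat.factorization_inj (Set.mem_setOf.mpr (swapFun_ne_zero hp.pos hq.pos h0))
    (Set.mem_setOf.mpr hd) ?_
  ext r
  rw [factorization_swapFun hp hq hpq h0, factorization_swapFun hp hq hpq hd,
    Equiv.swap_apply_self]

lemma swapFun_dvd_n {p q d : ℕ} (hp : p.Prime) (hq : q.Prime) (hpq : p ≠ q) (hn : n ≠ 0)
    (heq : n.factorization p = n.factorization q) (hd : d ∣ n) : swapFun p q d ∣ n := by
  have hd0 : d ≠ 0 := fun h => hn (by simpa [h, zero_dvd_iff] using hd)
  rw [← Nat.factorization_le_iff_dvd (swapFun_ne_zero hp.pos hq.pos hd0) hn]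
  intro r
  rw [factorization_swapFun hp hq hpq hd0]
  have hle : d.factorization (Equiv.swap p q r) ≤ n.factorization (Equiv.swap p q r) :=
    (Nat.factorization_le_iff_dvd hd0 hn).mpr hd _
  refine hle.trans (le_of_eq ?_)
  rcases eq_or_ne r p with rfl | hrp
  · rw [Equiv.swap_apply_left]; exact heq.symm
  · rcases eq_or_ne r q with rfl | hrq
    · rw [Equiv.swap_apply_right]; exact heq
    · rw [Equiv.swap_apply_of_ne_of_ne hrp hrq]

/-- The order automorphism of the divisor lattice swapping two primes with
equal exponents. -/
def swapIso (hn : n ≠ 0) {p q : ℕ} (hp : p.Prime) (hq : q.Prime) (hpq : p ≠ q)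
    (heq : n.factorization p = n.factorization q) : DivLattice n ≃o DivLattice n where
  toFun x := mk (swapFun p q x.val) (swapFun_dvd_n hp hq hpq hn heq x.prop)
  invFun x := mk (swapFun p q x.val) (swapFun_dvd_n hp hq hpq hn heq x.prop)
  left_inv x := ext (swapFun_swapFun hp hq hpq (val_ne_zero hn x))
  right_inv x := ext (swapFun_swapFun hp hq hpq (val_ne_zero hn x))
  map_rel_iff' := by
    intro a b
    constructor
    · intro h
      have := swapFun_dvd_swapFun hp hq hpq
        (swapFun_ne_zero hp.pos hq.pos (val_ne_zero hn a))
        (swapFun_ne_zero hp.pos hq.pos (val_ne_zero hn b)) h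
      rwa [swapFun_swapFun hp hq hpq (val_ne_zero hn a),
        swapFun_swapFun hp hq hpq (val_ne_zero hn b)] at this
    · intro h
      exact swapFun_dvd_swapFun hp hq hpq (val_ne_zero hn a) (val_ne_zero hn b) h

lemma swapIso_apply_prime (hn : n ≠ 0) {p q : ℕ} (hp : p.Prime) (hq : q.Prime) (hpq : p ≠ q)
    (heq : n.factorization p = n.factorization q) (hpn : p ∣ n) (hqn : q ∣ n) :
    swapIso hn hp hq hpq heq (mk p hpn) = mk q hqn := by
  refine ext ?_
  show swapFun p q p = q
  refine Nat.factorization_inj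
    (Set.mem_setOf.mpr (swapFun_ne_zero hp.pos hq.pos hp.pos.ne'))
    (Set.mem_setOf.mpr hq.pos.ne') ?_
  ext r
  rw [factorization_swapFun hp hq hpq hp.pos.ne', hp.factorization, hq.factorization]
  rcases eq_or_ne r q with rfl | hrq
  · rw [Equiv.swap_apply_right]
    simp
  · rcases eq_or_ne r p with rfl | hrp
    · rw [Equiv.swap_apply_left]
      simp [hpq, Ne.symm hpq]
    · rw [Equiv.swap_apply_of_ne_of_ne hrp hrq]
      simp [Ne.symm hrp, Ne.symm hrq]

lemma factorization_le_sigma (hn : n ≠ 0) (ψ : DivLattice n ≃o DivLattice n) (σ' : ℕ → ℕ)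
    (hσ' : ∀ p, p ∈ n.primeFactors → (σ' p).Prime ∧ σ' p ∣ n ∧
      ∀ b (hb : p ^ b ∣ n), (ψ (mk (p ^ b) hb)).val = σ' p ^ b)
    (p : ℕ) (hpmem : p ∈ n.primeFactors) :
    n.factorization p ≤ n.factorization (σ' p) := by
  have hdvd : p ^ n.factorization p ∣ n := Nat.ordProj_dvd n p
  have hval := (hσ' p hpmem).2.2 _ hdvd
  have hdn := (ψ (mk (p ^ n.factorization p) hdvd)).prop
  rw [hval] at hdn
  exact (Nat.Prime.pow_dvd_iff_le_factorization (hσ' p hpmem).1 hn).mp hdn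

lemma aut_eq_id_of_distinct (hn : n ≠ 0)
    (H : ∀ p q : ℕ, p.Prime → q.Prime → p ∣ n → q ∣ n →
        n.factorization p = n.factorization q → p = q)
    (φ : DivLattice n ≃o DivLattice n) : ∀ x, φ x = x := by
  obtain ⟨σ, hσ⟩ := sigma_spec hn φ
  obtain ⟨τ, hτ⟩ := sigma_spec hn φ.symm
  have hσ' : ∀ p, p ∈ n.primeFactors →
      (σ p).Prime ∧ σ p ∣ n ∧ ∀ b (hb : p ^ b ∣ n), ((φ.symm.symm) (mk (p ^ b) hb)).val = σ p ^ b := by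
    simpa using hσ
  refine eq_self_of_fixes hn φ ?_
  intro p b hp hb h
  have hpn : p ∣ n := (dvd_pow_self p hb.ne').trans h
  have hpmem : p ∈ n.primeFactors := Nat.mem_primeFactors.mpr ⟨hp, hpn, hn⟩
  have hσmem : σ p ∈ n.primeFactors := sigma_mem hn φ hσ hpmem
  have h1 : n.factorization p ≤ n.factorization (σ p) :=
    factorization_le_sigma hn φ σ hσ p hpmem
  have h2 : n.factorization (σ p) ≤ n.factorization (τ (σ p)) :=
    factorization_le_sigma hn φ.symm τ hτ (σ p) hσmem
  have hst : τ (σ p) = p := by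
    obtain ⟨hmem2, h3⟩ := sigma_tau hn φ.symm hτ hσ' hpmem
    exact h3
  rw [hst] at h2
  have heqf : n.factorization p = n.factorization (σ p) := le_antisymm h1 h2
  have hps : p = σ p := H p (σ p) hp (hσ p hpmem).1 hpn (hσ p hpmem).2.1 heqf
  refine ext ?_
  rw [(hσ p hpmem).2.2 b h, ← hps, val_mk]

/-! ### The distinguishing 2-coloring -/

/-- Color a divisor `1` iff it is a product of an initial segment of the sorted
list of prime factors of `n`. -/
noncomputable def color (n : ℕ) : DivLattice n → Fin 2 := fun x =>
  letI := Classical.propDecidable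
    (∃ i, 0 < i ∧ x.val = ((n.primeFactors.sort (· ≤ ·)).take i).prod)
  if ∃ i, 0 < i ∧ x.val = ((n.primeFactors.sort (· ≤ ·)).take i).prod then 1 else 0

lemma color_eq_one_iff (x : DivLattice n) :
    color n x = 1 ↔ ∃ i, 0 < i ∧ x.val = ((n.primeFactors.sort (· ≤ ·)).take i).prod := by
  unfold color
  split_ifs with h
  · simpa using h
  · simp only [iff_false_intro h, iff_false]
    decide

lemma prod_primes_ne_zero_primeFactors :
    ∀ (l : List ℕ), (∀ p ∈ l, p.Prime) → l.prod ≠ 0 ∧ l.prod.primeFactors = l.toFinset := by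
  intro l
  induction l with
  | nil => simp
  | cons a t ih =>
    intro h
    have ha : a.Prime := h a (List.mem_cons_self)
    obtain ⟨h0, hpf⟩ := ih (fun p hp => h p (List.mem_cons_of_mem a hp))
    constructor
    · rw [List.prod_cons]
      exact mul_ne_zero ha.pos.ne' h0
    · rw [List.prod_cons, Nat.primeFactors_mul ha.pos.ne' h0, ha.primeFactors, hpf,
        List.toFinset_cons, Finset.insert_eq]

lemma color_distinguishing (hn : 1 < n) : IsDistinguishing (color n) := by
  have hn0 : n ≠ 0 := by omega
  intro φ hc
  set L := n.primeFactors.sort (· ≤ ·) with hL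
  have hLprime : ∀ p ∈ L, p.Prime := fun p hp =>
    (Nat.mem_primeFactors.mp ((Finset.mem_sort _).mp hp)).1
  have hLnodup : L.Nodup := n.primeFactors.sort_nodup _
  have hLfin : L.toFinset = n.primeFactors := Finset.sort_toFinset _ _
  set k := L.length with hk
  have htake_dvd : ∀ i, (L.take i).prod ∣ n := by
    intro i
    have h1 : (L.take i).prod ∣ L.prod :=
      ⟨(L.drop i).prod, (List.prod_take_mul_prod_drop L i).symm⟩
    have h2 : L.prod = ∏ p ∈ n.primeFactors, p := by
      rw [← hLfin]
      have h3 := List.prod_toFinset (l := L) id hLnodup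
      rw [List.map_id] at h3
      exact h3.symm
    exact h1.trans (h2 ▸ Nat.prod_primeFactors_dvd n)
  have htakeprime : ∀ i, ∀ p ∈ L.take i, p.Prime :=
    fun i p hp => hLprime p (List.take_subset i L hp)
  have hcard : ∀ i, i ≤ k → ((L.take i).prod).primeFactors.card = i := by
    intro i hi
    rw [(prod_primes_ne_zero_primeFactors _ (htakeprime i)).2,
      List.toFinset_card_of_nodup ((List.take_sublist i L).nodup hLnodup),
      List.length_take]
    omega
  obtain ⟨σ, hσ⟩ := sigma_spec hn0 φ
  obtain ⟨τ, hτ⟩ := sigma_spec hn0 φ.symm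
  -- the image of the prime factors of x under φ is the σ-image
  have himg : ∀ x : DivLattice n, (φ x).val.primeFactors = x.val.primeFactors.image σ := by
    intro x
    ext s
    simp only [Finset.mem_image]
    constructor
    · intro hs
      obtain ⟨hsp, hsd, -⟩ := Nat.mem_primeFactors.mp hs
      have hsn : s ∈ n.primeFactors :=
        Nat.mem_primeFactors.mpr ⟨hsp, hsd.trans (φ x).prop, hn0⟩
      obtain ⟨htmem, hts⟩ := sigma_tau hn0 φ hσ hτ hsn
      have htd : τ s ∣ n := (Nat.mem_primeFactors.mp htmem).2.1
      have hφt : φ (mk (τ s) htd) = mk (σ (τ s)) (hσ (τ s) htmem).2.1 :=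
        sigma_mk_prime hn0 φ hσ htmem htd
      have hle : φ (mk (τ s) htd) ≤ φ x := by
        rw [hφt]
        show σ (τ s) ∣ (φ x).val
        rw [hts]
        exact hsd
      have htx : τ s ∣ x.val := by
        have := φ.le_iff_le.mp hle
        exact this
      refine ⟨τ s, ?_, hts⟩
      exact Nat.mem_primeFactors.mpr ⟨(Nat.mem_primeFactors.mp htmem).1, htx,
        val_ne_zero hn0 x⟩
    · rintro ⟨t, ht, rfl⟩
      obtain ⟨htp, htd, -⟩ := Nat.mem_primeFactors.mp ht
      have htn : t ∈ n.primeFactors := Nat.mem_primeFactors.mpr ⟨htp, htd.trans x.prop, hn0⟩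
      have hφt : φ (mk t (htd.trans x.prop)) = mk (σ t) (hσ t htn).2.1 :=
        sigma_mk_prime hn0 φ hσ htn (htd.trans x.prop)
      have hle : φ (mk t (htd.trans x.prop)) ≤ φ x := φ.monotone htd
      rw [hφt] at hle
      exact Nat.mem_primeFactors.mpr ⟨(hσ t htn).1, hle, val_ne_zero hn0 (φ x)⟩
  have hinj : Set.InjOn σ n.primeFactors := sigma_injOn hn0 φ hσ
  -- colored elements are fixed setwise, giving σ-invariance of initial segments
  have hseg : ∀ i, 0 < i → i ≤ k →
      ((L.take i).toFinset).image σ = (L.take i).toFinset := by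
    intro i hi hik
    set x : DivLattice n := mk ((L.take i).prod) (htake_dvd i) with hx
    have h1 : color n x = 1 := (color_eq_one_iff x).mpr ⟨i, hi, rfl⟩
    have h2 : color n (φ x) = 1 := by rw [hc x]; exact h1
    obtain ⟨j, hj, hval⟩ := (color_eq_one_iff (φ x)).mp h2
    rw [← hL] at hval
    have hpfx : x.val.primeFactors = (L.take i).toFinset :=
      (prod_primes_ne_zero_primeFactors _ (htakeprime i)).2
    have hcard1 : (φ x).val.primeFactors.card = i := by
      rw [himg x, Finset.card_image_of_injOn, hpfx,
        List.toFinset_card_of_nodup ((List.take_sublist i L).nodup hLnodup),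
        List.length_take]
      · omega
      · refine hinj.mono ?_
        intro r hr
        have : r ∣ x.val := Nat.dvd_of_mem_primeFactors hr
        exact Nat.mem_primeFactors.mpr ⟨Nat.prime_of_mem_primeFactors hr,
          this.trans x.prop, hn0⟩
    have hcard2 : (φ x).val.primeFactors.card = min j k := by
      rw [hval, (prod_primes_ne_zero_primeFactors _ (htakeprime j)).2,
        List.toFinset_card_of_nodup ((List.take_sublist j L).nodup hLnodup),
        List.length_take]
    have hmin : min j k = i := by rw [← hcard2, hcard1]
    have hvali : (φ x).val = (L.take i).prod := by
      rcases le_or_gt j k with hjk | hjk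
      · rwa [show j = i by omega] at hval
      · have hik' : i = k := by omega
        have e1 : L.take j = L := List.take_of_length_le (by omega)
        have e2 : L.take i = L := by rw [hik']; exact List.take_length (l := L)
        rw [hval, e1, e2]
    -- now compare prime factor sets
    have := himg x
    rw [hvali, (prod_primes_ne_zero_primeFactors _ (htakeprime i)).2, hpfx] at this
    exact this.symm
  -- σ fixes every prime factor, by induction along the sorted list
  have hfixσ : ∀ m, ∀ p ∈ (L.take m).toFinset, σ p = p := by
    intro m
    induction m with
    | zero => simp
    | succ m ih =>
      intro p hp
      rcases le_or_gt k m with hkm | hmk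
      · have hEq : L.take (m + 1) = L.take m := by
          rw [List.take_of_length_le hkm, List.take_of_length_le (by omega : L.length ≤ m + 1)]
        exact ih p (hEq ▸ hp)
      · have hPmem : ∀ r ∈ (L.take (m+1)).toFinset, r ∈ n.primeFactors := by
          intro r hr
          rw [← hLfin]
          exact List.mem_toFinset.mpr (List.take_subset _ L (List.mem_toFinset.mp hr))
        have hσp : σ p ∈ (L.take (m + 1)).toFinset := by
          rw [← hseg (m + 1) (Nat.succ_pos m) (by omega)]
          exact Finset.mem_image_of_mem σ hp
        by_cases hσtm : σ p ∈ (L.take m).toFinset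
        · have h1 : σ (σ p) = σ p := ih (σ p) hσtm
          have h2 : σ p ∈ n.primeFactors := hPmem (σ p) hσp
          have h3 : p ∈ n.primeFactors := hPmem p hp
          exact hinj h2 h3 h1
        · -- σ p and p both lie in take (m+1) \ take m
          have hptm : p ∈ (L.take m).toFinset ∨ p ∈ ((L.drop m).take 1).toFinset := by
            have : L.take (m + 1) = L.take m ++ (L.drop m).take 1 := by
              rw [← List.take_add]
            rw [this, List.toFinset_append, Finset.mem_union] at hp
            exact hp
          have hσptm : σ p ∈ (L.take m).toFinset ∨ σ p ∈ ((L.drop m).take 1).toFinset := by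
            have : L.take (m + 1) = L.take m ++ (L.drop m).take 1 := by
              rw [← List.take_add]
            rw [this, List.toFinset_append, Finset.mem_union] at hσp
            exact hσp
          rcases hptm with hptm | hptm
          · exact ih p hptm
          · rcases hσptm with h | h
            · exact absurd h hσtm
            · -- both in a one-element list
              have hdropm : (L.drop m).take 1 = [L.get ⟨m, hmk⟩] := by
                exact List.take_one_drop_eq_of_lt_length hmk
              rw [hdropm, List.toFinset_cons, List.toFinset_nil] at hptm h
              have hp' : p = L.get ⟨m, hmk⟩ := by simpa using hptm
              have hs' : σ p = L.get ⟨m, hmk⟩ := by simpa using h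
              rw [hs', hp']
  have hfixall : ∀ p ∈ n.primeFactors, σ p = p := by
    intro p hp
    apply hfixσ k
    rw [List.take_length, hLfin]
    exact hp
  refine eq_self_of_fixes hn0 φ ?_
  intro p b hp hb h
  have hpmem : p ∈ n.primeFactors :=
    Nat.mem_primeFactors.mpr ⟨hp, (dvd_pow_self p hb.ne').trans h, hn0⟩
  exact ext (by rw [(hσ p hpmem).2.2 b h, hfixall p hpmem, val_mk])

lemma zero_not_mem (hn : n ≠ 0) :
    ¬∃ c : DivLattice n → Fin 0, IsDistinguishing c := by
  rintro ⟨c, -⟩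
  exact (c (mk 1 (one_dvd n))).elim0

end DistAux

theorem distNum_divLattice (n : ℕ) (hn : 1 < n) :
    ((∀ p q : ℕ, p.Prime → q.Prime → p ∣ n → q ∣ n →
        n.factorization p = n.factorization q → p = q) → distNum (DivLattice n) = 1) ∧
    ((¬ ∀ p q : ℕ, p.Prime → q.Prime → p ∣ n → q ∣ n →
        n.factorization p = n.factorization q → p = q) → distNum (DivLattice n) = 2) := by
  have hn0 : n ≠ 0 := by omega
  constructor
  · intro H
    have h1 : ∃ c : DivLattice n → Fin 1, IsDistinguishing c := by
      refine ⟨fun _ => 0, fun φ _ => DistAux.aut_eq_id_of_distinct hn0 H φ⟩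
    have hS0 : sInf {k | ∃ c : DivLattice n → Fin k, IsDistinguishing c} ≠ 0 := by
      intro h
      have hmem := Nat.sInf_mem (⟨1, h1⟩ :
        Set.Nonempty {k | ∃ c : DivLattice n → Fin k, IsDistinguishing c})
      rw [h] at hmem
      exact DistAux.zero_not_mem hn0 hmem
    exact le_antisymm (Nat.sInf_le h1) (Nat.one_le_iff_ne_zero.mpr hS0)
  · intro H
    push_neg at H
    obtain ⟨p, q, hp, hq, hpn, hqn, heq, hpq⟩ := H
    have h2 : ∃ c : DivLattice n → Fin 2, IsDistinguishing c :=
      ⟨DistAux.color n, DistAux.color_distinguishing hn⟩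
    have h1 : ¬∃ c : DivLattice n → Fin 1, IsDistinguishing c := by
      rintro ⟨c, hc⟩
      have := hc (DistAux.swapIso hn0 hp hq hpq heq) (fun x => Subsingleton.elim _ _)
        (DistAux.mk p hpn)
      rw [DistAux.swapIso_apply_prime hn0 hp hq hpq heq hpn hqn] at this
      exact hpq (congrArg Subtype.val this).symm
    have hmem := Nat.sInf_mem (⟨2, h2⟩ :
      Set.Nonempty {k | ∃ c : DivLattice n → Fin k, IsDistinguishing c})
    show sInf {k | ∃ c : DivLattice n → Fin k, IsDistinguishing c} = 2
    refine le_antisymm (Nat.sInf_le h2) ?_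
    by_contra hlt
    push_neg at hlt
    have hcases : sInf {k | ∃ c : DivLattice n → Fin k, IsDistinguishing c} = 0 ∨
        sInf {k | ∃ c : DivLattice n → Fin k, IsDistinguishing c} = 1 := by omega
    rcases hcases with h | h
    · exact DistAux.zero_not_mem hn0 (h ▸ hmem)
    · exact h1 (h ▸ hmem)
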